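/- No uniform algorithm (one without a priori knowledge of n or of the dynamic network causal diameter) can solve consensus under the message adversary that guarantees in every round exactly one root component and eventually a d-round vertex-stable H-network-bounded root component, for any d. -/

import Mathlib

/-- A root component of a directed graph `G`: a strongly connected component
(maximal set of mutually reachable vertices) with no incoming edges from outside. -/
def IsRootComponent {V : Type*} (G : V → V → Prop) (R : Set V) : Prop :=
  R.Nonempty ∧ (∀ p ∈ R, ∀ q ∈ R, Relation.ReflTransGen G p q) ∧
    ∀ p ∈ R, ∀ q, G q p → q ∈ R

/-- A causal influence chain of length `k` from `p` (starting in round `r`) to `q`. -/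
def InflChain {V : Type*} (G : ℕ → V → V → Prop) (r : ℕ) (p q : V) (k : ℕ) : Prop :=
  ∃ f : ℕ → V, f 0 = p ∧ f k = q ∧ ∀ i < k, f i = f (i + 1) ∨ G (r + i) (f i) (f (i + 1))

/-- The dynamic causal distance `cd_r(p,q)`: length of the shortest causal influence
chain from `p` starting in round `r` to `q` (`⊤` if none exists, `1` for `p = q`). -/
noncomputable def cd {V : Type*} (G : ℕ → V → V → Prop) (r : ℕ) (p q : V) : ℕ∞ :=
  sInf {k : ℕ∞ | ∃ m : ℕ, k = (m : ℕ∞) ∧ 1 ≤ m ∧ InflChain G r p q m}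

/-- A (uniform) full-information round-based algorithm: its code refers to
process ids (natural numbers) and input values only, and is completely
independent of the system size `n` and of the dynamic network causal diameter. -/
structure ConsAlg (S M : Type*) where
  /-- initial state, from the process id and the binary input value -/
  init : ℕ → Bool → S
  /-- message sending function -/
  msg : S → M
  /-- state transition function, from the current state and the received
  messages (indexed by sender id) -/
  step : S → (ℕ → Option M) → S
  /-- decision (output) extracted from the state, if any -/
  out : S → Option Bool

open Classical in
/-- The run of algorithm `A` on `n` processes with inputs `x` against the
communication graph sequence `G`: `consRun A n G x r p` is the state of process
`p` at the end of round `r` (round `0` is the initial state). -/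
noncomputable def consRun {S M : Type*} (A : ConsAlg S M) (n : ℕ)
    (G : ℕ → Fin n → Fin n → Prop) (x : Fin n → Bool) : ℕ → Fin n → S
  | 0, p => A.init p.val (x p)
  | (r + 1), p => A.step (consRun A n G x r p) (fun id =>
      if h : ∃ q : Fin n, q.val = id ∧ q ≠ p ∧ G (r + 1) q p then
        some (A.msg (consRun A n G x r h.choose))
      else none)

/-- `H`-network-boundedness of a graph sequence with a single root component per
round: every sufficiently long vertex-stable root component reaches every
process within `H` rounds. -/
def HNetBounded {n : ℕ} (G : ℕ → Fin n → Fin n → Prop) (H : ℕ) : Prop :=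
  ∀ (a b : ℕ) (R : Set (Fin n)), 1 ≤ a →
    (∀ t, a ≤ t → t ≤ b → IsRootComponent (G t) R) →
    a + H ≤ b + 1 →
    ∀ t, a ≤ t → t + H ≤ b + 1 → ∀ q : Fin n, ∃ p ∈ R, cd G t p q ≤ (H : ℕ∞)

/-- Feasibility for the message adversary `MAd(d)`: every round graph has exactly
one root component, all vertex-stable root components are `H`-network-bounded for
some dynamic network causal diameter `H`, and eventually there is an interval of
`d` consecutive rounds with a vertex-stable root component. -/
def FeasibleMAd {n : ℕ} (d : ℕ) (G : ℕ → Fin n → Fin n → Prop) : Prop :=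
  (∀ r, 1 ≤ r → ∃! R : Set (Fin n), IsRootComponent (G r) R) ∧
  (∃ H, 1 ≤ H ∧ HNetBounded G H) ∧
  (∃ (rST : ℕ) (R : Set (Fin n)), 1 ≤ rST ∧
    ∀ t, rST ≤ t → t < rST + d → IsRootComponent (G t) R)

/-! ### auxiliary -/

namespace Stmt19Aux

def Fwd {n : ℕ} : Fin n → Fin n → Prop := fun p q => q.val = p.val + 1
def Rev {n : ℕ} : Fin n → Fin n → Prop := fun p q => p.val = q.val + 1

lemma fwd_mono {n} {p q : Fin n} (h : Relation.ReflTransGen Fwd p q) : p.val ≤ q.val := by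
  induction h with
  | refl => exact le_rfl
  | tail _ h ih => simp only [Fwd] at h; omega

lemma rev_mono {n} {p q : Fin n} (h : Relation.ReflTransGen Rev p q) : q.val ≤ p.val := by
  induction h with
  | refl => exact le_rfl
  | tail _ h ih => simp only [Rev] at h; omega

lemma root_fwd {n} (hn : 0 < n) : IsRootComponent (@Fwd n) {⟨0, hn⟩} := by
  refine ⟨⟨_, rfl⟩, ?_, ?_⟩
  · rintro p rfl q rfl; exact Relation.ReflTransGen.refl
  · rintro p rfl q hq; simp only [Fwd] at hq; omega

lemma root_fwd_eq {n} (hn : 0 < n) {R : Set (Fin n)}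
    (h : IsRootComponent (@Fwd n) R) : R = {⟨0, hn⟩} := by
  obtain ⟨⟨p, hp⟩, hscc, hcl⟩ := h
  have key : ∀ m (p : Fin n), p ∈ R → p.val ≤ m → (⟨0, hn⟩ : Fin n) ∈ R := by
    intro m
    induction m with
    | zero => intro p hp hle; have : p = ⟨0, hn⟩ := Fin.ext (by simp; omega); rwa [this] at hp
    | succ m ih =>
      intro p hp hle
      rcases Nat.eq_zero_or_pos p.val with h0 | h0
      · have : p = ⟨0, hn⟩ := Fin.ext (by simp; omega); rwa [this] at hp
      · have hp' : (⟨p.val - 1, by omega⟩ : Fin n) ∈ R :=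
          hcl p hp _ (by simp [Fwd]; omega)
        exact ih _ hp' (by simp; omega)
  have h0 : (⟨0, hn⟩ : Fin n) ∈ R := key p.val p hp le_rfl
  ext q
  constructor
  · intro hq
    have := fwd_mono (hscc q hq _ h0)
    simp only [Set.mem_singleton_iff]
    exact Fin.ext (by simp at this ⊢; omega)
  · rintro rfl; exact h0

lemma root_rev {n} (hn : 0 < n) : IsRootComponent (@Rev n) {⟨n - 1, by omega⟩} := by
  refine ⟨⟨_, rfl⟩, ?_, ?_⟩
  · rintro p rfl q rfl; exact Relation.ReflTransGen.refl
  · rintro p rfl q hq; simp only [Rev] at hq; have := q.isLt; omega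

lemma root_rev_eq {n} (hn : 0 < n) {R : Set (Fin n)}
    (h : IsRootComponent (@Rev n) R) : R = {⟨n - 1, by omega⟩} := by
  obtain ⟨⟨p, hp⟩, hscc, hcl⟩ := h
  have key : ∀ m (p : Fin n), p ∈ R → n - 1 - p.val ≤ m → (⟨n - 1, by omega⟩ : Fin n) ∈ R := by
    intro m
    induction m with
    | zero =>
      intro p hp hle
      have : p = ⟨n - 1, by omega⟩ := Fin.ext (by have := p.isLt; simp at hle ⊢; omega)
      rwa [this] at hp
    | succ m ih =>
      intro p hp hle
      rcases Nat.lt_or_ge p.val (n - 1) with h0 | h0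
      · have hp' : (⟨p.val + 1, by omega⟩ : Fin n) ∈ R :=
          hcl p hp _ (by simp only [Rev])
        exact ih _ hp' (by simp; omega)
      · have : p = ⟨n - 1, by omega⟩ := Fin.ext (by have := p.isLt; simp; omega)
        rwa [this] at hp
  have h0 : (⟨n - 1, by omega⟩ : Fin n) ∈ R := key (n - 1 - p.val) p hp le_rfl
  ext q
  constructor
  · intro hq
    have := rev_mono (hscc q hq _ h0)
    have := q.isLt
    simp only [Set.mem_singleton_iff]
    exact Fin.ext (by simp at *; omega)
  · rintro rfl; exact h0

lemma cd_le {V : Type*} {G : ℕ → V → V → Prop} {t : ℕ} {p q : V} {m : ℕ}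
    (hm : 1 ≤ m) (h : InflChain G t p q m) : cd G t p q ≤ (m : ℕ∞) :=
  sInf_le ⟨m, rfl, hm, h⟩

lemma chain_fwd {n : ℕ} (hn : 0 < n) {G : ℕ → Fin n → Fin n → Prop} {t : ℕ}
    (hG : ∀ i, i < n → ∀ p q : Fin n, Fwd p q → G (t + i) p q) (q : Fin n) :
    InflChain G t ⟨0, hn⟩ q n := by
  have hq := q.isLt
  refine ⟨fun i => ⟨min i q.val, by omega⟩, Fin.ext (by simp), Fin.ext (by simp; try omega), ?_⟩
  intro i hi
  rcases Nat.lt_or_ge i q.val with h | h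
  · exact Or.inr (hG i hi _ _ (by simp only [Fwd]; omega))
  · exact Or.inl (Fin.ext (by simp; omega))

lemma chain_rev {n : ℕ} (hn : 0 < n) {G : ℕ → Fin n → Fin n → Prop} {t : ℕ}
    (hG : ∀ i, i < n → ∀ p q : Fin n, Rev p q → G (t + i) p q) (q : Fin n) :
    InflChain G t ⟨n - 1, by omega⟩ q n := by
  have hq := q.isLt
  refine ⟨fun i => ⟨max (n - 1 - i) q.val, by omega⟩, Fin.ext (by simp; try omega),
    Fin.ext (by simp; try omega), ?_⟩
  intro i hi
  rcases Nat.lt_or_ge q.val (n - 1 - i) with h | h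
  · exact Or.inr (hG i hi _ _ (by simp only [Rev]; omega))
  · exact Or.inl (Fin.ext (by simp; omega))

/-- the state sequence of a process that never receives any message -/
def noHear {S M : Type*} (A : ConsAlg S M) (id : ℕ) (v : Bool) : ℕ → S
  | 0 => A.init id v
  | r + 1 => A.step (noHear A id v r) (fun _ => none)

lemma run_noHear {S M : Type*} (A : ConsAlg S M) (n : ℕ)
    (G : ℕ → Fin n → Fin n → Prop) (x : Fin n → Bool) (p : Fin n) (r : ℕ)
    (h : ∀ s, s < r → ∀ q : Fin n, ¬ G (s + 1) q p) :
    consRun A n G x r p = noHear A p.val (x p) r := by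
  induction r with
  | zero => rfl
  | succ r ih =>
    rw [consRun, noHear]
    congr 1
    · exact ih (fun s hs => h s (by omega))
    · funext id
      rw [dif_neg]
      rintro ⟨q, -, -, hq⟩
      exact h r (by omega) q hq

/-- the line graph that is reversed after round `T` -/
def lineG (T : ℕ) : ℕ → Fin (T + 2) → Fin (T + 2) → Prop :=
  fun r => if r ≤ T then Fwd else Rev

lemma stateEq {S M : Type*} (A : ConsAlg S M) (T : ℕ) (x x' : Fin (T + 2) → Bool)
    (hx : ∀ j : Fin (T + 2), 0 < j.val → x j = x' j) :
    ∀ r (i : Fin (T + 2)), (r < i.val ∨ i.val = T + 1) →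
      consRun A (T + 2) (lineG T) x r i = consRun A (T + 2) (lineG T) x' r i := by
  intro r
  induction r with
  | zero =>
    intro i hi
    have : x i = x' i := hx i (by rcases hi with h1 | h1 <;> omega)
    rw [consRun, consRun, this]
  | succ r ih =>
    intro i hi
    rw [consRun, consRun]
    congr 1
    · refine ih i ?_
      rcases hi with h1 | h1
      · exact Or.inl (by omega)
      · exact Or.inr h1
    · funext id
      by_cases h : ∃ q : Fin (T + 2), q.val = id ∧ q ≠ i ∧ lineG T (r + 1) q i
      · rw [dif_pos h, dif_pos h]
        have spec := h.choose_spec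
        set c := h.choose with hcdef
        obtain ⟨-, -, hG⟩ := spec
        have hcc : r < c.val ∨ c.val = T + 1 := by
          by_cases hT : r + 1 ≤ T
          · simp only [lineG, if_pos hT, Fwd] at hG
            rcases hi with h1 | h1 <;> exact Or.inl (by omega)
          · simp only [lineG, if_neg hT, Rev] at hG
            have h2 := c.isLt
            rcases hi with h1 | h1 <;> exact Or.inl (by omega)
        rw [ih c hcc]
      · rw [dif_neg h, dif_neg h]

end Stmt19Aux

namespace Stmt19Aux

lemma feas_const_fwd (d n : ℕ) (hn : 2 ≤ n) : FeasibleMAd d (fun _ : ℕ => @Fwd n) := by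
  have hn0 : 0 < n := by omega
  refine ⟨fun r _ => ⟨{⟨0, hn0⟩}, root_fwd hn0, fun R hR => root_fwd_eq hn0 hR⟩,
    ⟨n, by omega, ?_⟩, ⟨1, {⟨0, hn0⟩}, le_rfl, fun t _ _ => root_fwd hn0⟩⟩
  intro a b R ha hroot hab t hat htb q
  have hR : R = {⟨0, hn0⟩} := root_fwd_eq hn0 (hroot a le_rfl (by omega))
  exact ⟨⟨0, hn0⟩, by rw [hR]; rfl,
    cd_le (by omega) (chain_fwd hn0 (fun i hi p q' hpq => hpq) q)⟩

lemma feas_lineG (d T : ℕ) : FeasibleMAd d (lineG T) := by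
  have hn0 : 0 < T + 2 := by omega
  have hfwd : ∀ r, r ≤ T → lineG T r = Fwd := fun r hr => if_pos hr
  have hrev : ∀ r, ¬ (r ≤ T) → lineG T r = Rev := fun r hr => if_neg hr
  refine ⟨?_, ⟨T + 2, by omega, ?_⟩, ⟨T + 1, {⟨T + 1, by omega⟩}, by omega, ?_⟩⟩
  · intro r hr
    by_cases h : r ≤ T
    · rw [hfwd r h]
      exact ⟨{⟨0, hn0⟩}, root_fwd hn0, fun R hR => root_fwd_eq hn0 hR⟩
    · rw [hrev r h]
      exact ⟨{⟨T + 1, by omega⟩}, root_rev hn0, fun R hR => root_rev_eq hn0 hR⟩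
  · intro a b R ha hroot hab t hat htb q
    by_cases hb : b ≤ T
    · have hR : R = {⟨0, hn0⟩} := by
        have h1 := hroot a le_rfl (by omega)
        rw [hfwd a (by omega)] at h1
        exact root_fwd_eq hn0 h1
      refine ⟨⟨0, hn0⟩, by rw [hR]; rfl, cd_le (by omega) (chain_fwd hn0 ?_ q)⟩
      intro i hi p q' hpq
      rw [hfwd (t + i) (by omega)]
      exact hpq
    · by_cases haT : T < a
      · have hR : R = {⟨T + 1, by omega⟩} := by
          have h1 := hroot a le_rfl (by omega)
          rw [hrev a (by omega)] at h1
          exact root_rev_eq hn0 h1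
        refine ⟨⟨T + 1, by omega⟩, by rw [hR]; rfl,
          cd_le (by omega) (chain_rev hn0 ?_ q)⟩
        intro i hi p q' hpq
        rw [hrev (t + i) (by omega)]
        exact hpq
      · exfalso
        have h1 := hroot a le_rfl (by omega)
        have h2 := hroot b (by omega) le_rfl
        rw [hfwd a (by omega)] at h1
        rw [hrev b (by omega)] at h2
        have e1 := root_fwd_eq hn0 h1
        have e2 := root_rev_eq hn0 h2
        have : (⟨0, hn0⟩ : Fin (T + 2)) = ⟨T + 1, by omega⟩ := by
          rw [← Set.mem_singleton_iff]
          have : (⟨0, hn0⟩ : Fin (T + 2)) ∈ R := by rw [e1]; rfl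
          rw [e2] at this
          exact this
        have hv : (0 : ℕ) = T + 1 := congrArg Fin.val this
        omega
  · intro t ht _
    rw [hrev t (by omega)]
    exact root_rev hn0

end Stmt19Aux


open Stmt19Aux in
/-- Impossibility of uniform consensus: for every `d`, no uniform algorithm
(i.e. one whose code is independent of `n` and of the dynamic network causal
diameter) solves consensus — termination, agreement and validity — in all
systems of `n ≥ 2` processes under the message adversary guaranteeing exactly
one root component per round and, eventually, a `d`-round vertex-stable
(`H`-network-bounded) root component. -/
theorem stmt_19 :
    ∀ d : ℕ, 1 ≤ d →
      ¬ ∃ (S M : Type) (A : ConsAlg S M),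
        ∀ (n : ℕ), 2 ≤ n → ∀ G : ℕ → Fin n → Fin n → Prop, FeasibleMAd d G →
          ∀ x : Fin n → Bool,
            -- Termination
            (∀ p : Fin n, ∃ r : ℕ, (A.out (consRun A n G x r p)).isSome) ∧
            -- Agreement
            (∀ (p q : Fin n) (r r' : ℕ) (v v' : Bool),
              A.out (consRun A n G x r p) = some v →
              A.out (consRun A n G x r' q) = some v' → v = v') ∧
            -- Validity
            (∀ (p : Fin n) (r : ℕ) (v : Bool),
              A.out (consRun A n G x r p) = some v → ∃ q : Fin n, x q = v) := by

  intro d hd hex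
  obtain ⟨S, M, A, hA⟩ := hex
  have hn2 : (0 : ℕ) < 2 := by omega
  have hins2 : ∀ (r : ℕ), ∀ s, s < r → ∀ q : Fin 2,
      ¬ (fun _ : ℕ => @Fwd 2) (s + 1) q ⟨0, hn2⟩ := by
    intro r s hs q hq
    have hq' : (0 : ℕ) = q.val + 1 := hq
    omega
  -- run with all-false inputs on the constant forward line of 2 processes
  obtain ⟨term0, agree0, valid0⟩ :=
    hA 2 le_rfl (fun _ => Fwd) (feas_const_fwd d 2 le_rfl) (fun _ => false)
  obtain ⟨r0, hr0⟩ := term0 ⟨0, hn2⟩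
  obtain ⟨v0, hv0⟩ := Option.isSome_iff_exists.mp hr0
  have hval0 : v0 = false := by
    obtain ⟨q, hq⟩ := valid0 _ r0 v0 hv0
    exact hq.symm
  have hnh0 : A.out (noHear A 0 false r0) = some false := by
    have h := run_noHear A 2 (fun _ => Fwd) (fun _ => false) ⟨0, hn2⟩ r0 (hins2 r0)
    rw [h] at hv0
    subst hval0
    exact hv0
  -- run with all-true inputs
  obtain ⟨term1, agree1, valid1⟩ :=
    hA 2 le_rfl (fun _ => Fwd) (feas_const_fwd d 2 le_rfl) (fun _ => true)
  obtain ⟨r1, hr1⟩ := term1 ⟨0, hn2⟩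
  obtain ⟨v1, hv1⟩ := Option.isSome_iff_exists.mp hr1
  have hval1 : v1 = true := by
    obtain ⟨q, hq⟩ := valid1 _ r1 v1 hv1
    exact hq.symm
  have hnh1 : A.out (noHear A 0 true r1) = some true := by
    have h := run_noHear A 2 (fun _ => Fwd) (fun _ => true) ⟨0, hn2⟩ r1 (hins2 r1)
    rw [h] at hv1
    subst hval1
    exact hv1
  -- the switched line network
  set T := max r0 r1 with hT
  have hn0 : 0 < T + 2 := by omega
  set xC : Fin (T + 2) → Bool := fun i => decide (0 < i.val) with hxC
  set xC' : Fin (T + 2) → Bool := fun _ => true with hxC'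
  set p0 : Fin (T + 2) := ⟨0, hn0⟩ with hp0
  set qL : Fin (T + 2) := ⟨T + 1, by omega⟩ with hqL
  have hinsL : ∀ (r : ℕ), r ≤ T → ∀ s, s < r → ∀ q : Fin (T + 2),
      ¬ lineG T (s + 1) q p0 := by
    intro r hr s hs q hq
    have hle : s + 1 ≤ T := by omega
    rw [show lineG T (s + 1) = Fwd from if_pos hle] at hq
    have hq' : (0 : ℕ) = q.val + 1 := hq
    omega
  obtain ⟨termC, agreeC, validC⟩ := hA (T + 2) (by omega) (lineG T) (feas_lineG d T) xC
  obtain ⟨termC', agreeC', validC'⟩ := hA (T + 2) (by omega) (lineG T) (feas_lineG d T) xC'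
  have houtC0 : A.out (consRun A (T + 2) (lineG T) xC r0 p0) = some false := by
    have h := run_noHear A (T + 2) (lineG T) xC p0 r0 (hinsL r0 (le_max_left _ _))
    rw [h]
    have hx0 : xC p0 = false := by simp [hxC, hp0]
    rw [hx0]
    exact hnh0
  obtain ⟨rq, hrq⟩ := termC qL
  obtain ⟨vq, hvq⟩ := Option.isSome_iff_exists.mp hrq
  have hvqf : vq = false := (agreeC p0 qL r0 rq false vq houtC0 hvq).symm
  have hst := stateEq A T xC xC' (fun j hj => by simp [hxC, hxC']; simpa using hj) rq qL (Or.inr rfl)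
  have hvq' : A.out (consRun A (T + 2) (lineG T) xC' rq qL) = some false := by
    rw [← hst, hvq, hvqf]
  have houtC'0 : A.out (consRun A (T + 2) (lineG T) xC' r1 p0) = some true := by
    have h := run_noHear A (T + 2) (lineG T) xC' p0 r1 (hinsL r1 (le_max_right _ _))
    rw [h]
    exact hnh1
  have hcontra : true = false := agreeC' p0 qL r1 rq true false houtC'0 hvq'
  simp at hcontra
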